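/- Let M be a rooted trivalent map with boundary of degree k and n ≥ 1 trivalent vertices, and let w be the trivalent vertex incident to the root edge. Then exactly one of the following holds: (a) deleting w (together with the root) disconnects the map, and the two resulting components, each re-rooted at the dart vacated by w, are rooted trivalent maps with boundary of degrees k₁ and k₂ with k₁ + k₂ = k and with n₁ and n₂ trivalent vertices with n₁ + n₂ = n − 1; or (b) deleting w leaves the map connected, and the result, re-rooted at one vacated dart with the other vacated dart appended to the boundary, is a rooted trivalent map with boundary of degree k + 1 and n − 1 trivalent vertices. -/

import Mathlib

/-! ## Combinatorial maps -/

/-- the data of a candidate rooted trivalent map with boundary: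
a set of darts with functions `v`, `e`, a root dart and a boundary list -/
structure PreMap : Type 1 where
  carrier : Type
  v : carrier → carrier
  e : carrier → carrier
  root : carrier
  boundary : List carrier

/-- `M` is a rooted trivalent map with boundary: `v` and `e` generate a
transitive action of `Γ₃ = ⟨v, e ∣ v³ = e² = 1⟩`, the fixed points of `v` are
exactly the root and the fixed points of `e` are exactly the boundary. -/
structure IsRTMapB (M : PreMap) : Prop where
  v_cube : ∀ x, M.v (M.v (M.v x)) = x
  e_sq : ∀ x, M.e (M.e x) = x
  trans : ∀ x y, Relation.EqvGen (fun a b => M.v a = b ∨ M.e a = b) x y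
  v_fix : ∀ x, M.v x = x ↔ x = M.root
  e_fix : ∀ x, M.e x = x ↔ x ∈ M.boundary
  nodup : M.boundary.Nodup

/-- isomorphism of rooted maps with boundary -/
def MapIso (M M' : PreMap) : Prop :=
  ∃ h : M.carrier ≃ M'.carrier,
    (∀ x, h (M.v x) = M'.v (h x)) ∧ (∀ x, h (M.e x) = M'.e (h x)) ∧
    h M.root = M'.root ∧ M.boundary.map h = M'.boundary


/-- the darts deleted along with the trivalent vertex `w` incident to the
root: the root dart itself and the three darts of `w` -/
def delSet (M : PreMap) : Set M.carrier :=
  {M.root, M.e M.root, M.v (M.e M.root), M.v (M.v (M.e M.root))}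

/-- connectivity of the remaining darts after deleting `w` and the root -/
def DConn (M : PreMap) : M.carrier → M.carrier → Prop :=
  Relation.EqvGen (fun a b => a ∉ delSet M ∧ b ∉ delSet M ∧ (M.v a = b ∨ M.e a = b))

/-- the dart vacated by the first non-root port of `w` -/
def dartA (M : PreMap) : M.carrier := M.e (M.v (M.e M.root))

/-- the dart vacated by the second non-root port of `w` -/
def dartB (M : PreMap) : M.carrier := M.e (M.v (M.v (M.e M.root)))

/-- deleting `w` (together with the root) leaves the map connected: the two
vacated darts lie on a single edge (a loop at `w`), or they are joined by a
path avoiding the deleted darts -/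
def ConnCase (M : PreMap) : Prop :=
  dartA M = M.v (M.v (M.e M.root)) ∨ DConn M (dartA M) (dartB M)

attribute [local instance] Classical.propDecidable

def inComp (M : PreMap) (a x : M.carrier) : Prop := x ∉ delSet M ∧ DConn M a x

/-- the component of the vacated dart `a` after deleting `w` and the root,
re-rooted at a fresh univalent vertex (the dart `none`) glued onto `a` -/
noncomputable def compMap (M : PreMap) (a : M.carrier) : PreMap where
  carrier := Option {x : M.carrier // inComp M a x}
  v := fun d => match d with
    | none => none
    | some x => if h : inComp M a (M.v x.val) then some ⟨M.v x.val, h⟩ else none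
  e := fun d => match d with
    | none => if h : inComp M a a then some ⟨a, h⟩ else none
    | some x => if h : inComp M a (M.e x.val) then some ⟨M.e x.val, h⟩ else none
  root := none
  boundary :=
    if a ∈ delSet M then [none]
    else M.boundary.filterMap (fun x =>
      if h : inComp M a x then some (some ⟨x, h⟩) else none)

def inComp2 (M : PreMap) (x : M.carrier) : Prop :=
  x ∉ delSet M ∧ (DConn M (dartA M) x ∨ DConn M (dartB M) x)

/-- the map left after deleting `w` and the root in the connected case,
re-rooted at a fresh univalent vertex glued onto the vacated dart `dartA`,
with the other vacated dart `dartB` appended to the boundary -/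
noncomputable def connMap (M : PreMap) : PreMap where
  carrier := Option {x : M.carrier // inComp2 M x}
  v := fun d => match d with
    | none => none
    | some x => if h : inComp2 M (M.v x.val) then some ⟨M.v x.val, h⟩ else none
  e := fun d => match d with
    | none => if h : inComp2 M (dartA M) then some ⟨dartA M, h⟩ else none
    | some x =>
        if x.val = dartB M then some x
        else if h : inComp2 M (M.e x.val) then some ⟨M.e x.val, h⟩ else none
  root := none
  boundary :=
    (M.boundary.filterMap (fun x =>
      if h : inComp2 M x then some (some ⟨x, h⟩) else none)) ++
    [if h : inComp2 M (dartB M) then some ⟨dartB M, h⟩ else none]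


/-! ## Helper lemmas -/

set_option linter.unusedSectionVars false

section Helpers

variable {M : PreMap} (hM : IsRTMapB M) (her : M.e M.root ≠ M.root)
include hM her

lemma vinj : Function.Injective M.v := fun x y h => by
  rw [← hM.v_cube x, h, hM.v_cube]

lemma einj : Function.Injective M.e := fun x y h => by
  rw [← hM.e_sq x, h, hM.e_sq]

lemma vroot : M.v M.root = M.root := (hM.v_fix _).mpr rfl

lemma hd1r : M.v (M.e M.root) ≠ M.root := by
  intro h
  apply her
  have := congrArg M.v (congrArg M.v h)
  rwa [hM.v_cube, vroot hM her, vroot hM her] at this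

lemma hd2r : M.v (M.v (M.e M.root)) ≠ M.root := by
  intro h
  apply her
  have := congrArg M.v h
  rwa [hM.v_cube, vroot hM her] at this

lemma hd1d0 : M.v (M.e M.root) ≠ M.e M.root := fun h => her ((hM.v_fix _).mp h)

lemma hd2d1 : M.v (M.v (M.e M.root)) ≠ M.v (M.e M.root) :=
  fun h => hd1r hM her ((hM.v_fix _).mp h)

lemma hd2d0 : M.v (M.v (M.e M.root)) ≠ M.e M.root := by
  intro h
  have := congrArg M.v h
  rw [hM.v_cube] at this
  exact hd1d0 hM her this.symm

lemma mem_delSet {x : M.carrier} : x ∈ delSet M ↔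
    x = M.root ∨ x = M.e M.root ∨ x = M.v (M.e M.root) ∨ x = M.v (M.v (M.e M.root)) := by
  simp [delSet]

lemma root_mem_delSet : M.root ∈ delSet M := (mem_delSet hM her).mpr (Or.inl rfl)

lemma delSet_v {x : M.carrier} (h : x ∈ delSet M) : M.v x ∈ delSet M := by
  rcases (mem_delSet hM her).mp h with rfl | rfl | rfl | rfl
  · rw [vroot hM her]; exact root_mem_delSet hM her
  · exact (mem_delSet hM her).mpr (Or.inr (Or.inr (Or.inl rfl)))
  · exact (mem_delSet hM her).mpr (Or.inr (Or.inr (Or.inr rfl)))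
  · rw [hM.v_cube]; exact (mem_delSet hM her).mpr (Or.inr (Or.inl rfl))

lemma vmem_delSet {x : M.carrier} (h : M.v x ∈ delSet M) : x ∈ delSet M := by
  have h1 := delSet_v hM her (delSet_v hM her h)
  rwa [hM.v_cube] at h1

lemma emem_delSet {x : M.carrier} (h : M.e x ∈ delSet M) :
    x = M.root ∨ x = M.e M.root ∨ x = dartA M ∨ x = dartB M := by
  rcases (mem_delSet hM her).mp h with h' | h' | h' | h'
  · right; left; rw [← h', hM.e_sq]
  · left; have := congrArg M.e h'; rwa [hM.e_sq, hM.e_sq] at this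
  · right; right; left; rw [dartA, ← h', hM.e_sq]
  · right; right; right; rw [dartB, ← h', hM.e_sq]

lemma e_dartA : M.e (dartA M) = M.v (M.e M.root) := hM.e_sq _

lemma e_dartB : M.e (dartB M) = M.v (M.v (M.e M.root)) := hM.e_sq _

lemma dartA_ne_dartB : dartA M ≠ dartB M :=
  fun h => hd2d1 hM her (einj hM her h).symm

/-! ### DConn basics -/

lemma dconn_cases {x y : M.carrier} (h : DConn M x y) :
    x = y ∨ (x ∉ delSet M ∧ y ∉ delSet M) := by
  induction h with
  | rel a b hab => exact Or.inr ⟨hab.1, hab.2.1⟩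
  | refl a => exact Or.inl rfl
  | symm a b _ ih => rcases ih with rfl | ⟨h1, h2⟩; exacts [Or.inl rfl, Or.inr ⟨h2, h1⟩]
  | trans a b c _ _ ih1 ih2 =>
      rcases ih1 with rfl | ⟨h1, h2⟩
      · exact ih2
      · rcases ih2 with rfl | ⟨h3, h4⟩
        · exact Or.inr ⟨h1, h2⟩
        · exact Or.inr ⟨h1, h4⟩

lemma dconn_v {x : M.carrier} (hx : x ∉ delSet M) : DConn M x (M.v x) :=
  Relation.EqvGen.rel _ _ ⟨hx, fun h => hx (vmem_delSet hM her h), Or.inl rfl⟩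

lemma dconn_e {x : M.carrier} (hx : x ∉ delSet M) (hex : M.e x ∉ delSet M) :
    DConn M x (M.e x) :=
  Relation.EqvGen.rel _ _ ⟨hx, hex, Or.inr rfl⟩

lemma inComp_self {a : M.carrier} (ha : a ∉ delSet M) : inComp M a a :=
  ⟨ha, Relation.EqvGen.refl a⟩

lemma inComp_v {a x : M.carrier} (hx : inComp M a x) : inComp M a (M.v x) :=
  ⟨fun h => hx.1 (vmem_delSet hM her h), hx.2.trans _ _ _ (dconn_v hM her hx.1)⟩

lemma inComp_e {a x : M.carrier} (hx : inComp M a x) (hex : M.e x ∉ delSet M) :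
    inComp M a (M.e x) :=
  ⟨hex, hx.2.trans _ _ _ (dconn_e hM her hx.1 hex)⟩

lemma inComp_empty {a x : M.carrier} (ha : a ∈ delSet M) : ¬ inComp M a x := by
  rintro ⟨hx, hd⟩
  rcases dconn_cases hM her hd with rfl | ⟨h1, _⟩
  · exact hx ha
  · exact h1 ha

lemma reach : ∀ x, x ∉ delSet M → DConn M (dartA M) x ∨ DConn M (dartB M) x := by
  set P : M.carrier → Prop :=
    fun x => x ∈ delSet M ∨ DConn M (dartA M) x ∨ DConn M (dartB M) x with hP
  have step : ∀ a b, (M.v a = b ∨ M.e a = b) → P a → P b := by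
    intro a b hab hpa
    by_cases hb : b ∈ delSet M
    · exact Or.inl hb
    by_cases ha : a ∈ delSet M
    · rcases hab with hab | hab
      · exact absurd (hab ▸ delSet_v hM her ha) hb
      · rcases (mem_delSet hM her).mp ha with rfl | rfl | rfl | rfl
        · exact absurd (hab ▸ (mem_delSet hM her).mpr (Or.inr (Or.inl rfl))) hb
        · have hb' : b = M.root := by rw [← hab, hM.e_sq]
          exact absurd (hb' ▸ root_mem_delSet hM her) hb
        · exact Or.inr (Or.inl (hab ▸ Relation.EqvGen.refl _))
        · exact Or.inr (Or.inr (hab ▸ Relation.EqvGen.refl _))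
    · rcases hpa with hpa | hpa | hpa
      · exact absurd hpa ha
      · exact Or.inr (Or.inl (hpa.trans _ _ _ (Relation.EqvGen.rel _ _ ⟨ha, hb, hab⟩)))
      · exact Or.inr (Or.inr (hpa.trans _ _ _ (Relation.EqvGen.rel _ _ ⟨ha, hb, hab⟩)))
  have backstep : ∀ a b, (M.v a = b ∨ M.e a = b) → P b → P a := by
    intro a b hab hpb
    by_cases ha : a ∈ delSet M
    · exact Or.inl ha
    by_cases hb : b ∈ delSet M
    · rcases hab with hab | hab
      · exact absurd (vmem_delSet hM her (hab ▸ hb)) ha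
      · rcases emem_delSet hM her (hab ▸ hb) with rfl | rfl | rfl | rfl
        · exact absurd (root_mem_delSet hM her) ha
        · exact absurd ((mem_delSet hM her).mpr (Or.inr (Or.inl rfl))) ha
        · exact Or.inr (Or.inl (Relation.EqvGen.refl _))
        · exact Or.inr (Or.inr (Relation.EqvGen.refl _))
    · rcases hpb with hpb | hpb | hpb
      · exact absurd hpb hb
      · exact Or.inr (Or.inl (hpb.trans _ _ _
          (Relation.EqvGen.symm _ _ (Relation.EqvGen.rel _ _ ⟨ha, hb, hab⟩))))
      · exact Or.inr (Or.inr (hpb.trans _ _ _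
          (Relation.EqvGen.symm _ _ (Relation.EqvGen.rel _ _ ⟨ha, hb, hab⟩))))
  have iffP : ∀ x y, Relation.EqvGen (fun a b => M.v a = b ∨ M.e a = b) x y → (P x ↔ P y) := by
    intro x y h
    induction h with
    | rel a b hab => exact ⟨step a b hab, backstep a b hab⟩
    | refl a => exact Iff.rfl
    | symm a b _ ih => exact ih.symm
    | trans a b c _ _ ih1 ih2 => exact ih1.trans ih2
  intro x hx
  have := (iffP M.root x (hM.trans M.root x)).mp (Or.inl (root_mem_delSet hM her))
  exact this.resolve_left hx

end Helpers

/-! ### Generic list and cardinality lemmas -/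

lemma lenFM_all {α β : Type*} (l : List α) (f : α → Option β)
    (h : ∀ x ∈ l, (f x).isSome) : (l.filterMap f).length = l.length := by
  induction l with
  | nil => rfl
  | cons a t ih =>
      obtain ⟨b, hb⟩ := Option.isSome_iff_exists.mp (h a (List.mem_cons_self))
      simp [List.filterMap_cons, hb, ih (fun x hx => h x (List.mem_cons_of_mem a hx))]

lemma lenFM_split {α β γ : Type*} (l : List α) (f : α → Option β) (g : α → Option γ)
    (h : ∀ x ∈ l, ((f x).isSome ↔ ¬ (g x).isSome)) :
    (l.filterMap f).length + (l.filterMap g).length = l.length := by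
  induction l with
  | nil => rfl
  | cons a t ih =>
      have ih' := ih (fun x hx => h x (List.mem_cons_of_mem a hx))
      have ha := h a (List.mem_cons_self)
      by_cases hf : (f a).isSome
      · obtain ⟨b, hb⟩ := Option.isSome_iff_exists.mp hf
        have hg : g a = none := by
          have := ha.mp hf
          cases hga : g a
          · rfl
          · exact absurd (by simp [hga]) this
        simp [List.filterMap_cons, hb, hg]
        omega
      · obtain ⟨c, hc⟩ := Option.isSome_iff_exists.mp (by
          by_contra hg
          exact hf (ha.mpr hg))
        have hf' : f a = none := by
          cases hfa : f a
          · rfl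
          · exact absurd (by simp [hfa]) hf
        simp [List.filterMap_cons, hf', hc]
        omega

lemma lenFM_single {α β : Type*} (l : List α) (a : α) (b : β) (hnd : l.Nodup) (ha : a ∈ l) :
    (l.filterMap (fun x => if x = a then some b else none)).length = 1 := by
  classical
  induction l with
  | nil => simp at ha
  | cons c t ih =>
      rcases List.mem_cons.mp ha with rfl | ha'
      · have hnt : a ∉ t := (List.nodup_cons.mp hnd).1
        have : t.filterMap (fun x => if x = a then some b else none) = [] := by
          rw [List.filterMap_eq_nil_iff]
          intro x hx
          rw [if_neg]
          intro h; exact hnt (h ▸ hx)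
        simp [List.filterMap_cons, this]
      · have hca : c ≠ a := by
          intro h; exact (List.nodup_cons.mp hnd).1 (h ▸ ha')
        simp [List.filterMap_cons, if_neg hca, ih (List.nodup_cons.mp hnd).2 ha']

lemma three_dvd_card {α : Type} [Finite α] (f g : α → α)
    (hgf : ∀ x, g (f x) = x) (hfg : ∀ x, f (g x) = x)
    (h3 : ∀ x, f (f (f x)) = x) (hfix : ∀ x, f x ≠ x) : 3 ∣ Nat.card α := by
  classical
  let σ : Equiv.Perm α := ⟨f, g, hgf, hfg⟩
  have hσ3 : σ ^ 3 = 1 := by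
    ext x
    show f (f (f x)) = x
    exact h3 x
  have hp : IsPGroup 3 (Subgroup.zpowers σ) := by
    intro g'
    refine ⟨1, ?_⟩
    obtain ⟨n, hn⟩ := g'.2
    have hg : (g' : Equiv.Perm α) = σ ^ n := hn ▸ rfl
    have : (g' : Equiv.Perm α) ^ (3 : ℕ) ^ 1 = 1 := by
      rw [hg, ← zpow_natCast, ← zpow_mul, mul_comm, zpow_mul, zpow_natCast]
      norm_num [hσ3]
    exact Subtype.ext (by rw [SubmonoidClass.coe_pow]; simpa using this)
  have hfixed : MulAction.fixedPoints (Subgroup.zpowers σ) α = ∅ := by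
    ext x
    simp only [Set.mem_empty_iff_false, iff_false, MulAction.mem_fixedPoints]
    intro h
    exact hfix x (h ⟨σ, Subgroup.mem_zpowers σ⟩)
  have := hp.card_modEq_card_fixedPoints α
  rw [hfixed] at this
  simpa [Nat.modEq_zero_iff_dvd] using this

/-! ### compMap lemmas -/

section CompMap

variable {M : PreMap} (hM : IsRTMapB M) (her : M.e M.root ≠ M.root)
include hM her

lemma compMap_v_none (a : M.carrier) : (compMap M a).v none = none := rfl

lemma compMap_v_some (a : M.carrier) (x : {z // inComp M a z}) :
    (compMap M a).v (some x) = some ⟨M.v x.val, inComp_v hM her x.2⟩ := by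
  show (if h : inComp M a (M.v x.val) then some (⟨M.v x.val, h⟩ : {z // inComp M a z}) else none)
    = some ⟨M.v x.val, inComp_v hM her x.2⟩
  exact dif_pos _

lemma compMap_e_none_pos (a : M.carrier) (h : inComp M a a) :
    (compMap M a).e none = some ⟨a, h⟩ := by
  show (if h : inComp M a a then some (⟨a, h⟩ : {z // inComp M a z}) else none) = some ⟨a, h⟩
  exact dif_pos _

lemma compMap_e_none_neg (a : M.carrier) (h : ¬ inComp M a a) :
    (compMap M a).e none = none := by
  show (if h : inComp M a a then some (⟨a, h⟩ : {z // inComp M a z}) else none) = none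
  rw [dif_neg h]

lemma compMap_e_some_pos (a : M.carrier) (x : {z // inComp M a z})
    (h : inComp M a (M.e x.val)) : (compMap M a).e (some x) = some ⟨M.e x.val, h⟩ := by
  show (if h : inComp M a (M.e x.val) then some (⟨M.e x.val, h⟩ : {z // inComp M a z}) else none)
    = some ⟨M.e x.val, h⟩
  exact dif_pos _

lemma compMap_e_some_neg (a : M.carrier) (x : {z // inComp M a z})
    (h : ¬ inComp M a (M.e x.val)) : (compMap M a).e (some x) = none := by
  show (if h : inComp M a (M.e x.val) then some (⟨M.e x.val, h⟩ : {z // inComp M a z}) else none) = none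
  rw [dif_neg h]

lemma mem_compMap_boundary (a : M.carrier) (ha : a ∉ delSet M) (d : (compMap M a).carrier) :
    d ∈ (compMap M a).boundary ↔
      ∃ (x : M.carrier) (h : inComp M a x), x ∈ M.boundary ∧ d = some ⟨x, h⟩ := by
  revert d
  show ∀ d : Option {z // inComp M a z}, d ∈ (if a ∈ delSet M then ([none] : List (Option {z // inComp M a z})) else M.boundary.filterMap (fun x => if h : inComp M a x then some (some (⟨x, h⟩ : {z // inComp M a z})) else none)) ↔
    ∃ (x : M.carrier) (h : inComp M a x), x ∈ M.boundary ∧ d = some ⟨x, h⟩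
  intro d
  rw [if_neg ha, List.mem_filterMap]
  constructor
  · rintro ⟨y, hy, heq⟩
    by_cases h : inComp M a y
    · rw [dif_pos h] at heq
      exact ⟨y, h, hy, (Option.some_injective _ heq).symm⟩
    · rw [dif_neg h] at heq; cases heq
  · rintro ⟨x, h, hxb, rfl⟩
    exact ⟨x, hxb, by rw [dif_pos h]⟩

/-- the degenerate component: `a` was deleted, the component is a single fresh dart -/
lemma isRTMapB_compMap_deg (a : M.carrier) (ha : a ∈ delSet M) :
    IsRTMapB (compMap M a) := by
  have hempty : ∀ x : M.carrier, ¬ inComp M a x := fun x => inComp_empty hM her ha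
  have hall : ∀ d : (compMap M a).carrier, d = none := by
    rintro (_ | x)
    · rfl
    · exact absurd x.2 (hempty x.val)
  have hv : ∀ d, (compMap M a).v d = d := by
    intro d; rw [hall d]; rfl
  have he : ∀ d, (compMap M a).e d = d := by
    intro d; rw [hall d]; exact compMap_e_none_neg hM her a (hempty a)
  have hbd : (compMap M a).boundary = [none] := by
    show (if a ∈ delSet M then [none] else _) = [none]
    rw [if_pos ha]
  constructor
  · intro d; rw [hv, hv, hv]
  · intro d; rw [he, he]
  · intro d d'; rw [hall d, hall d']; exact Relation.EqvGen.refl _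
  · intro d; rw [hv]; exact ⟨fun _ => hall d, fun _ => rfl⟩
  · intro d; rw [he, hbd, hall d]; exact ⟨fun _ => List.mem_singleton_self _, fun _ => rfl⟩
  · rw [hbd]; exact List.nodup_singleton _

lemma lift_comp (a : M.carrier) :
    ∀ {x y : M.carrier}, DConn M x y → ∀ (hx : inComp M a x) (hy : inComp M a y),
      Relation.EqvGen (fun p q => (compMap M a).v p = q ∨ (compMap M a).e p = q)
        (some ⟨x, hx⟩) (some ⟨y, hy⟩) := by
  intro x y h
  induction h with
  | rel p q hpq =>
      intro hx hy
      rcases hpq.2.2 with h' | h'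
      · apply Relation.EqvGen.rel
        left
        rw [compMap_v_some hM her a ⟨p, hx⟩]
        exact congrArg some (Subtype.ext h')
      · apply Relation.EqvGen.rel
        right
        have h'' : inComp M a (M.e p) := h' ▸ hy
        rw [compMap_e_some_pos hM her a ⟨p, hx⟩ h'']
        exact congrArg some (Subtype.ext h')
  | refl p => intro hx hy; exact Relation.EqvGen.refl _
  | symm p q h ih =>
      intro hx hy
      exact Relation.EqvGen.symm _ _ (ih hy hx)
  | trans p q r h1 h2 ih1 ih2 =>
      intro hx hy
      rcases dconn_cases hM her h1 with rfl | ⟨_, hq⟩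
      · exact ih2 hx hy
      · have hm : inComp M a q := ⟨hq, Relation.EqvGen.trans _ _ _ hx.2 h1⟩
        exact Relation.EqvGen.trans _ _ _ (ih1 hx hm) (ih2 hm hy)

lemma compMap_conn (a : M.carrier) (ha : a ∉ delSet M) :
    ∀ d d', Relation.EqvGen
      (fun p q => (compMap M a).v p = q ∨ (compMap M a).e p = q) d d' := by
  have haa : inComp M a a := inComp_self hM her ha
  have key : ∀ d, Relation.EqvGen
      (fun p q => (compMap M a).v p = q ∨ (compMap M a).e p = q) none d := by
    rintro (_ | x)
    · exact Relation.EqvGen.refl _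
    · refine Relation.EqvGen.trans _ _ _
        (Relation.EqvGen.rel _ _ (Or.inr (compMap_e_none_pos hM her a haa))) ?_
      exact lift_comp hM her a x.2.2 haa x.2
  intro d d'
  exact Relation.EqvGen.trans _ _ _ (Relation.EqvGen.symm _ _ (key d)) (key d')

/-- the main component lemma -/
lemma isRTMapB_compMap (a : M.carrier) (ha : a ∉ delSet M) (hea : M.e a ∈ delSet M)
    (honly : ∀ x, inComp M a x → M.e x ∈ delSet M → x = a) :
    IsRTMapB (compMap M a) := by
  have haa : inComp M a a := inComp_self hM her ha
  have hnaa : ¬ inComp M a (M.e a) := fun h => h.1 hea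
  constructor
  · rintro (_ | x)
    · rfl
    · rw [compMap_v_some hM her, compMap_v_some hM her, compMap_v_some hM her]
      exact congrArg some (Subtype.ext (hM.v_cube x.val))
  · rintro (_ | x)
    · rw [compMap_e_none_pos hM her a haa, compMap_e_some_neg hM her a _ hnaa]
    · by_cases hxa : x.val = a
      · have h1 : ¬ inComp M a (M.e x.val) := by rw [hxa]; exact hnaa
        rw [compMap_e_some_neg hM her a x h1, compMap_e_none_pos hM her a haa]
        exact congrArg some (Subtype.ext hxa.symm)
      · have hex : M.e x.val ∉ delSet M := fun h => hxa (honly x.val x.2 h)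
        have h1 : inComp M a (M.e x.val) := inComp_e hM her x.2 hex
        rw [compMap_e_some_pos hM her a x h1]
        have h2 : inComp M a (M.e (M.e x.val)) := by rw [hM.e_sq]; exact x.2
        rw [compMap_e_some_pos hM her a _ h2]
        exact congrArg some (Subtype.ext (hM.e_sq x.val))
  · exact compMap_conn hM her a ha
  · rintro (_ | x)
    · exact ⟨fun _ => rfl, fun _ => rfl⟩
    · rw [compMap_v_some hM her]
      constructor
      · intro h
        have := Subtype.ext_iff.mp (Option.some_injective _ h)
        exact absurd ((hM.v_fix x.val).mp this ▸ root_mem_delSet hM her) x.2.1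
      · intro h; cases h
  · rintro (_ | x)
    · rw [compMap_e_none_pos hM her a haa]
      constructor
      · intro h; cases h
      · intro h
        obtain ⟨x, hx, _, heq⟩ := (mem_compMap_boundary hM her a ha none).mp h
        cases heq
    · rw [mem_compMap_boundary hM her a ha (some x)]
      by_cases hxb : x.val ∈ M.boundary
      · have hfix : M.e x.val = x.val := (hM.e_fix x.val).mpr hxb
        have h1 : inComp M a (M.e x.val) := by rw [hfix]; exact x.2
        rw [compMap_e_some_pos hM her a x h1]
        constructor
        · intro _; exact ⟨x.val, x.2, hxb, rfl⟩
        · intro _; exact congrArg some (Subtype.ext hfix)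
      · constructor
        · intro h
          by_cases h1 : inComp M a (M.e x.val)
          · rw [compMap_e_some_pos hM her a x h1] at h
            have := Subtype.ext_iff.mp (Option.some_injective _ h)
            exact absurd ((hM.e_fix x.val).mp this) hxb
          · rw [compMap_e_some_neg hM her a x h1] at h
            cases h
        · rintro ⟨y, hy, hyb, heq⟩
          have : y = x.val := congrArg (fun o => Option.getD (Option.map Subtype.val o) y) heq.symm
          exact absurd (this ▸ hyb) hxb
  · show List.Nodup (if a ∈ delSet M then ([none] : List (Option {z // inComp M a z})) else M.boundary.filterMap (fun x => if h : inComp M a x then some (some (⟨x, h⟩ : {z // inComp M a z})) else none))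
    rw [if_neg ha]
    refine List.Nodup.filterMap ?_ hM.nodup
    intro p q b hp hq
    rw [Option.mem_def] at hp hq
    by_cases h1 : inComp M a p
    · rw [dif_pos h1] at hp
      by_cases h2 : inComp M a q
      · rw [dif_pos h2] at hq
        have := (Option.some_injective _ hp).trans (Option.some_injective _ hq).symm
        exact congrArg Subtype.val (Option.some_injective _ this)
      · rw [dif_neg h2] at hq; cases hq
    · rw [dif_neg h1] at hp; cases hp

end CompMap

/-! ### connMap lemmas -/

section ConnMap

variable {M : PreMap} (hM : IsRTMapB M) (her : M.e M.root ≠ M.root)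
include hM her

lemma inComp2_v {x : M.carrier} (hx : inComp2 M x) : inComp2 M (M.v x) :=
  ⟨fun h => hx.1 (vmem_delSet hM her h),
    hx.2.imp (fun h => h.trans _ _ _ (dconn_v hM her hx.1))
      (fun h => h.trans _ _ _ (dconn_v hM her hx.1))⟩

lemma inComp2_e {x : M.carrier} (hx : inComp2 M x) (hex : M.e x ∉ delSet M) :
    inComp2 M (M.e x) :=
  ⟨hex, hx.2.imp (fun h => h.trans _ _ _ (dconn_e hM her hx.1 hex))
      (fun h => h.trans _ _ _ (dconn_e hM her hx.1 hex))⟩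

lemma inComp2_A (hA : dartA M ∉ delSet M) : inComp2 M (dartA M) :=
  ⟨hA, Or.inl (Relation.EqvGen.refl _)⟩

lemma inComp2_B (hB : dartB M ∉ delSet M) : inComp2 M (dartB M) :=
  ⟨hB, Or.inr (Relation.EqvGen.refl _)⟩

lemma inComp2_dartA_all (hconn : DConn M (dartA M) (dartB M)) {x : M.carrier}
    (hx : inComp2 M x) : DConn M (dartA M) x :=
  hx.2.elim id (fun h => hconn.trans _ _ _ h)

lemma e_dartA_mem : M.e (dartA M) ∈ delSet M := by
  rw [e_dartA hM her]
  exact (mem_delSet hM her).mpr (Or.inr (Or.inr (Or.inl rfl)))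

lemma e_dartB_mem : M.e (dartB M) ∈ delSet M := by
  rw [e_dartB hM her]
  exact (mem_delSet hM her).mpr (Or.inr (Or.inr (Or.inr rfl)))

lemma henB {x : M.carrier} (hx : x ∉ delSet M) : M.e x ≠ dartB M := by
  intro h
  have := congrArg M.e h
  rw [hM.e_sq, e_dartB hM her] at this
  exact hx (this ▸ (mem_delSet hM her).mpr (Or.inr (Or.inr (Or.inr rfl))))

lemma honly2 {x : M.carrier} (hx : x ∉ delSet M) (hex : M.e x ∈ delSet M) :
    x = dartA M ∨ x = dartB M := by
  rcases emem_delSet hM her hex with rfl | rfl | h | h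
  · exact absurd (root_mem_delSet hM her) hx
  · exact absurd ((mem_delSet hM her).mpr (Or.inr (Or.inl rfl))) hx
  · exact Or.inl h
  · exact Or.inr h

lemma connMap_v_none : (connMap M).v none = none := rfl

lemma connMap_v_some (x : {z // inComp2 M z}) :
    (connMap M).v (some x) = some ⟨M.v x.val, inComp2_v hM her x.2⟩ := by
  show (if h : inComp2 M (M.v x.val) then some (⟨M.v x.val, h⟩ : {z // inComp2 M z}) else none)
    = some ⟨M.v x.val, inComp2_v hM her x.2⟩
  exact dif_pos _

lemma connMap_e_none_pos (h : inComp2 M (dartA M)) :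
    (connMap M).e none = some ⟨dartA M, h⟩ := by
  show (if h : inComp2 M (dartA M) then some (⟨dartA M, h⟩ : {z // inComp2 M z}) else none)
    = some ⟨dartA M, h⟩
  exact dif_pos _

lemma connMap_e_none_neg (h : ¬ inComp2 M (dartA M)) : (connMap M).e none = none := by
  show (if h : inComp2 M (dartA M) then some (⟨dartA M, h⟩ : {z // inComp2 M z}) else none) = none
  exact dif_neg h

lemma connMap_e_some_B (x : {z // inComp2 M z}) (h : x.val = dartB M) :
    (connMap M).e (some x) = some x := by
  show (if x.val = dartB M then some x else _) = some x
  rw [if_pos h]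

lemma connMap_e_some_pos (x : {z // inComp2 M z}) (hne : x.val ≠ dartB M)
    (h : inComp2 M (M.e x.val)) : (connMap M).e (some x) = some ⟨M.e x.val, h⟩ := by
  show (if x.val = dartB M then some x else
      if h : inComp2 M (M.e x.val) then some (⟨M.e x.val, h⟩ : {z // inComp2 M z}) else none)
    = some ⟨M.e x.val, h⟩
  rw [if_neg hne]
  exact dif_pos _

lemma connMap_e_some_neg (x : {z // inComp2 M z}) (hne : x.val ≠ dartB M)
    (h : ¬ inComp2 M (M.e x.val)) : (connMap M).e (some x) = none := by
  show (if x.val = dartB M then some x else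
      if h : inComp2 M (M.e x.val) then some (⟨M.e x.val, h⟩ : {z // inComp2 M z}) else none)
    = none
  rw [if_neg hne]
  exact dif_neg h

/-- the degenerate connMap for the loop case -/
lemma isRTMapB_connMap_deg (hA : dartA M ∈ delSet M) (hB : dartB M ∈ delSet M)
    (hbd : M.boundary = []) : IsRTMapB (connMap M) := by
  have hempty : ∀ x : M.carrier, ¬ inComp2 M x := by
    rintro x ⟨hx, hd | hd⟩
    · rcases dconn_cases hM her hd with rfl | ⟨h1, _⟩
      · exact hx hA
      · exact h1 hA
    · rcases dconn_cases hM her hd with rfl | ⟨h1, _⟩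
      · exact hx hB
      · exact h1 hB
  have hall : ∀ d : (connMap M).carrier, d = none := by
    rintro (_ | x)
    · rfl
    · exact absurd x.2 (hempty x.val)
  have hv : ∀ d, (connMap M).v d = d := by
    intro d; rw [hall d]; rfl
  have he : ∀ d, (connMap M).e d = d := by
    intro d; rw [hall d]; exact connMap_e_none_neg hM her (hempty _)
  have hbd' : (connMap M).boundary = [none] := by
    show (M.boundary.filterMap _) ++ [_] = [none]
    rw [hbd]
    simp only [List.filterMap_nil, List.nil_append]
    rw [dif_neg (hempty _)]
  constructor
  · intro d; rw [hv, hv, hv]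
  · intro d; rw [he, he]
  · intro d d'; rw [hall d, hall d']; exact Relation.EqvGen.refl _
  · intro d; rw [hv]; exact ⟨fun _ => hall d, fun _ => rfl⟩
  · intro d; rw [he, hbd', hall d]; exact ⟨fun _ => List.mem_singleton_self _, fun _ => rfl⟩
  · rw [hbd']; exact List.nodup_singleton _

lemma lift_conn :
    ∀ {x y : M.carrier}, DConn M x y → ∀ (hx : inComp2 M x) (hy : inComp2 M y),
      Relation.EqvGen (fun p q => (connMap M).v p = q ∨ (connMap M).e p = q)
        (some ⟨x, hx⟩) (some ⟨y, hy⟩) := by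
  intro x y h
  induction h with
  | rel p q hpq =>
      intro hx hy
      rcases hpq.2.2 with h' | h'
      · apply Relation.EqvGen.rel
        left
        rw [connMap_v_some hM her ⟨p, hx⟩]
        exact congrArg some (Subtype.ext h')
      · apply Relation.EqvGen.rel
        right
        have hpB : p ≠ dartB M := by
          rintro rfl
          exact hpq.2.1 (h' ▸ e_dartB_mem hM her)
        have h'' : inComp2 M (M.e p) := h' ▸ hy
        rw [connMap_e_some_pos hM her ⟨p, hx⟩ hpB h'']
        exact congrArg some (Subtype.ext h')
  | refl p => intro hx hy; exact Relation.EqvGen.refl _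
  | symm p q h ih =>
      intro hx hy
      exact Relation.EqvGen.symm _ _ (ih hy hx)
  | trans p q r h1 h2 ih1 ih2 =>
      intro hx hy
      rcases dconn_cases hM her h1 with rfl | ⟨_, hq⟩
      · exact ih2 hx hy
      · have hm : inComp2 M q :=
          ⟨hq, hx.2.imp (fun h => h.trans _ _ _ h1) (fun h => h.trans _ _ _ h1)⟩
        exact Relation.EqvGen.trans _ _ _ (ih1 hx hm) (ih2 hm hy)

lemma mem_connMap_boundary (hB : dartB M ∉ delSet M) (d : (connMap M).carrier) :
    d ∈ (connMap M).boundary ↔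
      (∃ (x : M.carrier) (h : inComp2 M x), x ∈ M.boundary ∧ d = some ⟨x, h⟩) ∨
        d = some ⟨dartB M, inComp2_B hM her hB⟩ := by
  revert d
  show ∀ d : Option {z // inComp2 M z}, d ∈ (M.boundary.filterMap (fun x => if h : inComp2 M x then some (some (⟨x, h⟩ : {z // inComp2 M z})) else none) ++ [if h : inComp2 M (dartB M) then some (⟨dartB M, h⟩ : {z // inComp2 M z}) else none] : List (Option {z // inComp2 M z})) ↔
    (∃ (x : M.carrier) (h : inComp2 M x), x ∈ M.boundary ∧ d = some ⟨x, h⟩) ∨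
      d = some ⟨dartB M, inComp2_B hM her hB⟩
  intro d
  rw [List.mem_append, List.mem_filterMap, dif_pos (inComp2_B hM her hB)]
  apply or_congr
  · constructor
    · rintro ⟨y, hy, heq⟩
      by_cases h : inComp2 M y
      · rw [dif_pos h] at heq
        exact ⟨y, h, hy, (Option.some_injective _ heq).symm⟩
      · rw [dif_neg h] at heq; cases heq
    · rintro ⟨x, h, hxb, rfl⟩
      exact ⟨x, hxb, by rw [dif_pos h]⟩
  · simp

/-- the main connMap lemma -/
lemma isRTMapB_connMap (hA : dartA M ∉ delSet M) (hB : dartB M ∉ delSet M)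
    (hconn : DConn M (dartA M) (dartB M)) : IsRTMapB (connMap M) := by
  have hAB : dartA M ≠ dartB M := dartA_ne_dartB hM her
  have hiA : inComp2 M (dartA M) := inComp2_A hM her hA
  have hiB : inComp2 M (dartB M) := inComp2_B hM her hB
  have hneA : ¬ inComp2 M (M.e (dartA M)) := fun h => h.1 (e_dartA_mem hM her)
  constructor
  · rintro (_ | x)
    · rfl
    · rw [connMap_v_some hM her, connMap_v_some hM her, connMap_v_some hM her]
      exact congrArg some (Subtype.ext (hM.v_cube x.val))
  · rintro (_ | x)
    · rw [connMap_e_none_pos hM her hiA, connMap_e_some_neg hM her _ hAB hneA]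
    · by_cases hxB : x.val = dartB M
      · rw [connMap_e_some_B hM her x hxB, connMap_e_some_B hM her x hxB]
      · by_cases hxA : x.val = dartA M
        · have h1 : ¬ inComp2 M (M.e x.val) := by rw [hxA]; exact hneA
          rw [connMap_e_some_neg hM her x hxB h1, connMap_e_none_pos hM her hiA]
          exact congrArg some (Subtype.ext hxA.symm)
        · have hex : M.e x.val ∉ delSet M := by
            intro h
            rcases honly2 hM her x.2.1 h with h' | h'
            exacts [hxA h', hxB h']
          have h1 : inComp2 M (M.e x.val) := inComp2_e hM her x.2 hex
          rw [connMap_e_some_pos hM her x hxB h1]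
          have hene : M.e x.val ≠ dartB M := henB hM her x.2.1
          have h2 : inComp2 M (M.e (M.e x.val)) := by rw [hM.e_sq]; exact x.2
          rw [connMap_e_some_pos hM her _ hene h2]
          exact congrArg some (Subtype.ext (hM.e_sq x.val))
  · have key : ∀ d, Relation.EqvGen
        (fun p q => (connMap M).v p = q ∨ (connMap M).e p = q) none d := by
      rintro (_ | x)
      · exact Relation.EqvGen.refl _
      · refine Relation.EqvGen.trans _ _ _
          (Relation.EqvGen.rel _ _ (Or.inr (connMap_e_none_pos hM her hiA))) ?_
        exact lift_conn hM her (inComp2_dartA_all hM her hconn x.2) hiA x.2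
    intro d d'
    exact Relation.EqvGen.trans _ _ _ (Relation.EqvGen.symm _ _ (key d)) (key d')
  · rintro (_ | x)
    · exact ⟨fun _ => rfl, fun _ => rfl⟩
    · rw [connMap_v_some hM her]
      constructor
      · intro h
        have := Subtype.ext_iff.mp (Option.some_injective _ h)
        exact absurd ((hM.v_fix x.val).mp this ▸ root_mem_delSet hM her) x.2.1
      · intro h; cases h
  · rintro (_ | x)
    · rw [connMap_e_none_pos hM her hiA, mem_connMap_boundary hM her hB none]
      constructor
      · intro h; cases h
      · rintro (⟨x, hx, _, heq⟩ | heq) <;> cases heq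
    · rw [mem_connMap_boundary hM her hB (some x)]
      by_cases hxB : x.val = dartB M
      · rw [connMap_e_some_B hM her x hxB]
        exact ⟨fun _ => Or.inr (congrArg some (Subtype.ext hxB)), fun _ => rfl⟩
      · have hxnb : x.val ∉ M.boundary → (connMap M).e (some x) ≠ some x := by
          intro hxb h
          by_cases h1 : inComp2 M (M.e x.val)
          · rw [connMap_e_some_pos hM her x hxB h1] at h
            have := Subtype.ext_iff.mp (Option.some_injective _ h)
            exact hxb ((hM.e_fix x.val).mp this)
          · rw [connMap_e_some_neg hM her x hxB h1] at h
            cases h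
        by_cases hxb : x.val ∈ M.boundary
        · have hfix : M.e x.val = x.val := (hM.e_fix x.val).mpr hxb
          have h1 : inComp2 M (M.e x.val) := by rw [hfix]; exact x.2
          rw [connMap_e_some_pos hM her x hxB h1]
          constructor
          · intro _; exact Or.inl ⟨x.val, x.2, hxb, rfl⟩
          · intro _; exact congrArg some (Subtype.ext hfix)
        · constructor
          · intro h; exact absurd h (hxnb hxb)
          · rintro (⟨y, hy, hyb, heq⟩ | heq)
            · have : y = x.val :=
                congrArg (fun o => Option.getD (Option.map Subtype.val o) y) heq.symm
              exact absurd (this ▸ hyb) hxb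
            · have : dartB M = x.val :=
                congrArg (fun o => Option.getD (Option.map Subtype.val o) (dartB M)) heq.symm
              exact absurd this.symm hxB
  · show List.Nodup (M.boundary.filterMap (fun x => if h : inComp2 M x then some (some (⟨x, h⟩ : {z // inComp2 M z})) else none) ++ [if h : inComp2 M (dartB M) then some (⟨dartB M, h⟩ : {z // inComp2 M z}) else none] : List (Option {z // inComp2 M z}))
    rw [List.nodup_append]
    refine ⟨?_, List.nodup_singleton _, ?_⟩
    · refine List.Nodup.filterMap ?_ hM.nodup
      intro p q b hp hq
      rw [Option.mem_def] at hp hq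
      by_cases h1 : inComp2 M p
      · rw [dif_pos h1] at hp
        by_cases h2 : inComp2 M q
        · rw [dif_pos h2] at hq
          have := (Option.some_injective _ hp).trans (Option.some_injective _ hq).symm
          exact congrArg Subtype.val (Option.some_injective _ this)
        · rw [dif_neg h2] at hq; cases hq
      · rw [dif_neg h1] at hp; cases hp
    · intro d hd b hd' hdb
      subst hdb
      rw [dif_pos (inComp2_B hM her hB)] at hd'
      rw [List.mem_singleton] at hd'
      subst hd'
      obtain ⟨y, hy, heq⟩ := List.mem_filterMap.mp hd
      by_cases h : inComp2 M y
      · rw [dif_pos h] at heq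
        have hyB : y = dartB M :=
          congrArg Subtype.val (Option.some_injective _ (Option.some_injective _ heq))
        have : M.e (dartB M) = dartB M := (hM.e_fix _).mpr (hyB ▸ hy)
        rw [e_dartB hM her] at this
        exact hB (this ▸ (mem_delSet hM her).mpr (Or.inr (Or.inr (Or.inr rfl))))
      · rw [dif_neg h] at heq; cases heq

end ConnMap

/-! ### counting helpers -/

lemma card_subtype_eq_ncard {α : Type} (p : α → Prop) :
    Nat.card {x // p x} = ({x | p x} : Set α).ncard :=
  Nat.card_coe_set_eq _

section Counting

variable {M : PreMap} (hM : IsRTMapB M) (her : M.e M.root ≠ M.root)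
include hM her

lemma inComp2_empty (hA : dartA M ∈ delSet M) (hB : dartB M ∈ delSet M) :
    ∀ x, ¬ inComp2 M x := by
  rintro x ⟨hx, hd | hd⟩
  · rcases dconn_cases hM her hd with rfl | ⟨h1, _⟩
    · exact hx hA
    · exact h1 hA
  · rcases dconn_cases hM her hd with rfl | ⟨h1, _⟩
    · exact hx hB
    · exact h1 hB

lemma ncard_delSet : (delSet M).ncard = 4 := by
  have h1 : M.root ∉ ({M.e M.root, M.v (M.e M.root), M.v (M.v (M.e M.root))} :
      Set M.carrier) := by
    simp only [Set.mem_insert_iff, Set.mem_singleton_iff, not_or]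
    exact ⟨fun h => her h.symm, fun h => hd1r hM her h.symm, fun h => hd2r hM her h.symm⟩
  have h2 : M.e M.root ∉ ({M.v (M.e M.root), M.v (M.v (M.e M.root))} : Set M.carrier) := by
    simp only [Set.mem_insert_iff, Set.mem_singleton_iff, not_or]
    exact ⟨fun h => hd1d0 hM her h.symm, fun h => hd2d0 hM her h.symm⟩
  have h3 : M.v (M.e M.root) ∉ ({M.v (M.v (M.e M.root))} : Set M.carrier) := by
    simp only [Set.mem_singleton_iff]
    exact fun h => hd2d1 hM her h.symm
  rw [delSet, Set.ncard_insert_of_notMem h1 (Set.toFinite _),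
    Set.ncard_insert_of_notMem h2 (Set.toFinite _),
    Set.ncard_insert_of_notMem h3 (Set.toFinite _), Set.ncard_singleton]

lemma bd_delSet {x : M.carrier} (hxb : x ∈ M.boundary) (hxd : x ∈ delSet M) :
    x = M.v (M.e M.root) ∨ x = M.v (M.v (M.e M.root)) := by
  have hfix : M.e x = x := (hM.e_fix x).mpr hxb
  rcases (mem_delSet hM her).mp hxd with rfl | rfl | h | h
  · exact absurd hfix her
  · rw [hM.e_sq] at hfix
    exact absurd hfix.symm her
  · exact Or.inl h
  · exact Or.inr h

lemma card_compMap_deg (a : M.carrier) (ha : a ∈ delSet M) :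
    Nat.card (compMap M a).carrier = 1 := by
  have : IsEmpty {x // inComp M a x} := ⟨fun x => inComp_empty hM her ha x.2⟩
  show Nat.card (Option {x // inComp M a x}) = 1
  rw [Finite.card_option, Nat.card_of_isEmpty]

lemma len_compMap_deg (a : M.carrier) (ha : a ∈ delSet M) :
    (compMap M a).boundary.length = 1 := by
  show (if a ∈ delSet M then [none] else _).length = 1
  rw [if_pos ha]
  rfl

variable [Finite M.carrier]

lemma ncard_compl_delSet :
    ({x : M.carrier | x ∉ delSet M}).ncard = Nat.card M.carrier - 4 := by
  have h := Set.ncard_add_ncard_compl (delSet M) (Set.toFinite _) (Set.toFinite _)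
  rw [ncard_delSet hM her] at h
  have : ({x : M.carrier | x ∉ delSet M}) = (delSet M)ᶜ := rfl
  rw [this]
  omega

lemma three_dvd_comp (a : M.carrier) : 3 ∣ Nat.card {x // inComp M a x} := by
  refine three_dvd_card (fun y => ⟨M.v y.val, inComp_v hM her y.2⟩)
    (fun y => ⟨M.v (M.v y.val), inComp_v hM her (inComp_v hM her y.2)⟩) ?_ ?_ ?_ ?_
  · intro y; exact Subtype.ext (hM.v_cube y.val)
  · intro y
    refine Subtype.ext ?_
    show M.v (M.v (M.v y.val)) = y.val
    exact hM.v_cube y.val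
  · intro y; exact Subtype.ext (hM.v_cube y.val)
  · intro y h
    have := Subtype.ext_iff.mp h
    exact absurd ((hM.v_fix y.val).mp this ▸ root_mem_delSet hM her) y.2.1

lemma card_compMap (a : M.carrier) :
    Nat.card (compMap M a).carrier = ({x | inComp M a x} : Set M.carrier).ncard + 1 := by
  show Nat.card (Option {x // inComp M a x}) = _
  rw [Finite.card_option, card_subtype_eq_ncard]

lemma card_connMap :
    Nat.card (connMap M).carrier = ({x | inComp2 M x} : Set M.carrier).ncard + 1 := by
  show Nat.card (Option {x // inComp2 M x}) = _
  rw [Finite.card_option, card_subtype_eq_ncard]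

end Counting

lemma isSome_dite {β : Type*} (p : Prop) [Decidable p] (f : p → β) :
    (if h : p then some (f h) else none).isSome ↔ p := by
  by_cases h : p <;> simp [h]

/-- Root-vertex decomposition: for a rooted trivalent map with boundary of
degree `k` and `n ≥ 1` trivalent vertices, exactly one of the following
holds.  (a) Deleting the trivalent vertex `w` incident to the root (together
with the root) disconnects the map, and the two resulting components, each
re-rooted at the dart vacated by `w`, are rooted trivalent maps with
boundary of degrees `k₁ + k₂ = k` and with `n₁ + n₂ = n - 1` trivalent
vertices; or (b) deleting `w` leaves the map connected, and the result,
re-rooted at one vacated dart with the other vacated dart appended to the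
boundary, is a rooted trivalent map with boundary of degree `k + 1` and
`n - 1` trivalent vertices. -/
theorem root_vertex_decomposition (M : PreMap) (hM : IsRTMapB M) (n k : ℕ)
    (hn : 1 ≤ n) (hcard : Nat.card M.carrier = 3 * n + 1)
    (hk : M.boundary.length = k) :
    (¬ ConnCase M ∧
      IsRTMapB (compMap M (dartA M)) ∧ IsRTMapB (compMap M (dartB M)) ∧
      (∃ n₁ n₂ : ℕ, n₁ + n₂ = n - 1 ∧
        Nat.card (compMap M (dartA M)).carrier = 3 * n₁ + 1 ∧
        Nat.card (compMap M (dartB M)).carrier = 3 * n₂ + 1) ∧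
      (∃ k₁ k₂ : ℕ, k₁ + k₂ = k ∧
        (compMap M (dartA M)).boundary.length = k₁ ∧
        (compMap M (dartB M)).boundary.length = k₂)) ∨
    (ConnCase M ∧
      IsRTMapB (connMap M) ∧
      Nat.card (connMap M).carrier = 3 * (n - 1) + 1 ∧
      (connMap M).boundary.length = k + 1) := by
  classical
  have hfin : Finite M.carrier := Nat.finite_of_card_ne_zero (by omega)
  -- the root is not a boundary dart
  have her : M.e M.root ≠ M.root := by
    intro h
    have key : ∀ x y : M.carrier, Relation.EqvGen (fun a b => M.v a = b ∨ M.e a = b) x y →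
        (x = M.root ↔ y = M.root) := by
      intro x y hxy
      induction hxy with
      | rel a b hab =>
          rcases hab with rfl | rfl
          · constructor
            · rintro rfl; exact (hM.v_fix _).mpr rfl
            · intro hb
              have := congrArg M.v (congrArg M.v hb)
              rwa [hM.v_cube, (hM.v_fix M.root).mpr rfl, (hM.v_fix M.root).mpr rfl] at this
          · constructor
            · rintro rfl; exact h
            · intro hb
              have := congrArg M.e hb
              rwa [hM.e_sq, h] at this
      | refl a => exact Iff.rfl
      | symm a b _ ih => exact ih.symm
      | trans a b c _ _ ih1 ih2 => exact ih1.trans ih2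
    have hall : ∀ x : M.carrier, x = M.root :=
      fun x => (key M.root x (hM.trans M.root x)).mp rfl
    have hss : Subsingleton M.carrier := ⟨fun a b => (hall a).trans (hall b).symm⟩
    have := Finite.card_le_one_iff_subsingleton.mpr hss
    omega
  by_cases hloop : dartA M = M.v (M.v (M.e M.root))
  · -- the loop case
    right
    have hA' : dartA M ∈ delSet M :=
      (mem_delSet hM her).mpr (Or.inr (Or.inr (Or.inr hloop)))
    have hBd1 : dartB M = M.v (M.e M.root) := by
      rw [dartB, ← hloop, dartA, hM.e_sq]
    have hB' : dartB M ∈ delSet M :=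
      (mem_delSet hM her).mpr (Or.inr (Or.inr (Or.inl hBd1)))
    have halldel : ∀ x, x ∈ delSet M := by
      intro x
      by_contra hx
      rcases reach hM her x hx with hd | hd
      · rcases dconn_cases hM her hd with heq | ⟨h1, _⟩
        · exact hx (heq ▸ hA')
        · exact h1 hA'
      · rcases dconn_cases hM her hd with heq | ⟨h1, _⟩
        · exact hx (heq ▸ hB')
        · exact h1 hB'
    have hbd : M.boundary = [] := by
      rw [List.eq_nil_iff_forall_not_mem]
      intro b hb
      have hfix : M.e b = b := (hM.e_fix b).mpr hb
      rcases (mem_delSet hM her).mp (halldel b) with rfl | rfl | heq | heq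
      · exact her hfix
      · rw [hM.e_sq] at hfix
        exact her hfix.symm
      · subst heq
        exact hd2d1 hM her (hloop.symm.trans hfix)
      · subst heq
        exact hd2d1 hM her ((hBd1.symm.trans hfix).symm)
    have hk0 : k = 0 := by rw [← hk, hbd]; rfl
    have hcard4 : Nat.card M.carrier = 4 := by
      have huniv : delSet M = Set.univ := Set.eq_univ_iff_forall.mpr halldel
      rw [← Set.ncard_univ, ← huniv, ncard_delSet hM her]
    have hn1 : n = 1 := by omega
    have hempty : ∀ x, ¬ inComp2 M x := inComp2_empty hM her hA' hB'
    refine ⟨Or.inl hloop, isRTMapB_connMap_deg hM her hA' hB' hbd, ?_, ?_⟩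
    · have : IsEmpty {x // inComp2 M x} := ⟨fun x => hempty x.val x.2⟩
      show Nat.card (Option {x // inComp2 M x}) = 3 * (n - 1) + 1
      rw [Finite.card_option, Nat.card_of_isEmpty, hn1]
    · show ((M.boundary.filterMap _) ++ [_]).length = k + 1
      rw [hbd, hk0]
      rfl
  by_cases hA : dartA M ∈ delSet M
  · -- dartA is a deleted dart: dartA = d1 is a boundary dart
    left
    have hAd1 : dartA M = M.v (M.e M.root) := by
      rcases (mem_delSet hM her).mp hA with heq | heq | heq | heq
      · exfalso
        have := congrArg M.e heq
        rw [e_dartA hM her] at this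
        exact hd1d0 hM her this
      · exfalso
        have := congrArg M.e heq
        rw [e_dartA hM her, hM.e_sq] at this
        exact hd1r hM her this
      · exact heq
      · exact absurd heq hloop
    have hd1b : M.v (M.e M.root) ∈ M.boundary := (hM.e_fix _).mp hAd1
    have hnotconn : ¬ ConnCase M := by
      rintro (h | h)
      · exact hloop h
      · rcases dconn_cases hM her h with heq | ⟨h1, _⟩
        · exact dartA_ne_dartB hM her heq
        · exact h1 hA
    by_cases hB : dartB M ∈ delSet M
    · -- both darts deleted: M is a single vertex with two boundary darts
      have hBd2 : dartB M = M.v (M.v (M.e M.root)) := by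
        rcases (mem_delSet hM her).mp hB with heq | heq | heq | heq
        · exfalso
          have := congrArg M.e heq
          rw [e_dartB hM her] at this
          exact hd2d0 hM her this
        · exfalso
          have := congrArg M.e heq
          rw [e_dartB hM her, hM.e_sq] at this
          exact hd2r hM her this
        · exfalso
          have := congrArg M.e heq
          rw [e_dartB hM her] at this
          exact hloop this.symm
        · exact heq
      have hd2b : M.v (M.v (M.e M.root)) ∈ M.boundary := (hM.e_fix _).mp hBd2
      have halldel : ∀ x, x ∈ delSet M := by
        intro x
        by_contra hx
        rcases reach hM her x hx with hd | hd
        · rcases dconn_cases hM her hd with heq | ⟨h1, _⟩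
          · exact hx (heq ▸ hA)
          · exact h1 hA
        · rcases dconn_cases hM her hd with heq | ⟨h1, _⟩
          · exact hx (heq ▸ hB)
          · exact h1 hB
      have hcard4 : Nat.card M.carrier = 4 := by
        have huniv : delSet M = Set.univ := Set.eq_univ_iff_forall.mpr halldel
        rw [← Set.ncard_univ, ← huniv, ncard_delSet hM her]
      have hn1 : n = 1 := by omega
      have hk2 : k = 2 := by
        have hmem : ∀ x, x ∈ M.boundary ↔
            (x = M.v (M.e M.root) ∨ x = M.v (M.v (M.e M.root))) := by
          intro x
          constructor
          · intro hx
            exact bd_delSet hM her hx (halldel x)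
          · rintro (rfl | rfl)
            exacts [hd1b, hd2b]
        have htf : M.boundary.toFinset =
            {M.v (M.e M.root), M.v (M.v (M.e M.root))} := by
          ext x
          simp [List.mem_toFinset, hmem x]
        have hlen := List.toFinset_card_of_nodup hM.nodup
        rw [htf, Finset.card_insert_of_notMem (by
          simp only [Finset.mem_singleton]
          exact fun h => hd2d1 hM her h.symm), Finset.card_singleton] at hlen
        omega
      refine ⟨hnotconn, isRTMapB_compMap_deg hM her _ hA, isRTMapB_compMap_deg hM her _ hB,
        ⟨0, 0, by omega, ?_, ?_⟩, ⟨1, 1, by omega,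
          len_compMap_deg hM her _ hA, len_compMap_deg hM her _ hB⟩⟩
      · rw [card_compMap_deg hM her _ hA]
      · rw [card_compMap_deg hM her _ hB]
    · -- only dartA deleted: component of dartB is everything
      have hfull : ∀ x, x ∉ delSet M → inComp M (dartB M) x := by
        intro x hx
        rcases reach hM her x hx with hd | hd
        · rcases dconn_cases hM her hd with heq | ⟨h1, _⟩
          · exact absurd (heq ▸ hA) hx
          · exact absurd hA h1
        · exact ⟨hx, hd⟩
      have honly : ∀ x, inComp M (dartB M) x → M.e x ∈ delSet M → x = dartB M := by
        intro x hx hex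
        rcases emem_delSet hM her hex with rfl | rfl | rfl | rfl
        · exact absurd (root_mem_delSet hM her) hx.1
        · exact absurd ((mem_delSet hM her).mpr (Or.inr (Or.inl rfl))) hx.1
        · exact absurd hA hx.1
        · rfl
      have hset : ({x | inComp M (dartB M) x} : Set M.carrier) = {x | x ∉ delSet M} := by
        ext x
        exact ⟨fun h => h.1, fun h => hfull x h⟩
      refine ⟨hnotconn, isRTMapB_compMap_deg hM her _ hA,
        isRTMapB_compMap hM her (dartB M) hB (e_dartB_mem hM her) honly,
        ⟨0, n - 1, by omega, ?_, ?_⟩, ?_⟩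
      · rw [card_compMap_deg hM her _ hA]
      · rw [card_compMap hM her, hset, ncard_compl_delSet hM her, hcard]
        omega
      · have hBbd : (compMap M (dartB M)).boundary = M.boundary.filterMap
            (fun x => if h : inComp M (dartB M) x then some (some ⟨x, h⟩) else none) := by
          exact if_neg hB
        have hsplit := lenFM_split M.boundary
          (fun x => if h : inComp M (dartB M) x then some (some (⟨x, h⟩ : {z // inComp M (dartB M) z})) else none)
          (fun x => if x = M.v (M.e M.root) then some 0 else none) ?_
        · have hone := lenFM_single M.boundary (M.v (M.e M.root)) 0 hM.nodup hd1b
          refine ⟨1, (compMap M (dartB M)).boundary.length, ?_,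
            len_compMap_deg hM her _ hA, rfl⟩
          have hlB : (compMap M (dartB M)).boundary.length = (M.boundary.filterMap (fun x => if h : inComp M (dartB M) x then some (some (⟨x, h⟩ : {z // inComp M (dartB M) z})) else none)).length := congrArg List.length hBbd
          omega
        · intro x hx
          rw [isSome_dite]
          constructor
          · intro h
            have hxd : x ∉ delSet M := h.1
            simp only [Option.isSome_iff_exists]
            rintro ⟨b, hb⟩
            by_cases hxe : x = M.v (M.e M.root)
            · exact hxd (hxe ▸ (mem_delSet hM her).mpr (Or.inr (Or.inr (Or.inl rfl))))
            · rw [if_neg hxe] at hb; cases hb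
          · intro h
            have hxe : x ≠ M.v (M.e M.root) := by
              intro heq
              exact h (by simp [heq])
            apply hfull
            intro hxd
            rcases bd_delSet hM her hx hxd with heq | heq
            · exact hxe heq
            · -- x = d2, so d2 is a boundary dart, so dartB = d2 ∈ delSet, contradiction
              apply hB
              have hfix : M.e x = x := (hM.e_fix x).mpr hx
              rw [heq] at hfix
              exact (mem_delSet hM her).mpr (Or.inr (Or.inr (Or.inr hfix)))
  by_cases hB : dartB M ∈ delSet M
  · -- only dartB deleted (mirror case)
    left
    have hBd2 : dartB M = M.v (M.v (M.e M.root)) := by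
      rcases (mem_delSet hM her).mp hB with heq | heq | heq | heq
      · exfalso
        have := congrArg M.e heq
        rw [e_dartB hM her] at this
        exact hd2d0 hM her this
      · exfalso
        have := congrArg M.e heq
        rw [e_dartB hM her, hM.e_sq] at this
        exact hd2r hM her this
      · exfalso
        have := congrArg M.e heq
        rw [e_dartB hM her] at this
        exact hloop this.symm
      · exact heq
    have hd2b : M.v (M.v (M.e M.root)) ∈ M.boundary := (hM.e_fix _).mp hBd2
    have hnotconn : ¬ ConnCase M := by
      rintro (h | h)
      · exact hloop h
      · rcases dconn_cases hM her h with heq | ⟨_, h2⟩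
        · exact dartA_ne_dartB hM her heq
        · exact h2 hB
    have hfull : ∀ x, x ∉ delSet M → inComp M (dartA M) x := by
      intro x hx
      rcases reach hM her x hx with hd | hd
      · exact ⟨hx, hd⟩
      · rcases dconn_cases hM her hd with heq | ⟨h1, _⟩
        · exact absurd (heq ▸ hB) hx
        · exact absurd hB h1
    have honly : ∀ x, inComp M (dartA M) x → M.e x ∈ delSet M → x = dartA M := by
      intro x hx hex
      rcases emem_delSet hM her hex with rfl | rfl | rfl | rfl
      · exact absurd (root_mem_delSet hM her) hx.1
      · exact absurd ((mem_delSet hM her).mpr (Or.inr (Or.inl rfl))) hx.1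
      · rfl
      · exact absurd hB hx.1
    have hset : ({x | inComp M (dartA M) x} : Set M.carrier) = {x | x ∉ delSet M} := by
      ext x
      exact ⟨fun h => h.1, fun h => hfull x h⟩
    refine ⟨hnotconn, isRTMapB_compMap hM her (dartA M) hA (e_dartA_mem hM her) honly,
      isRTMapB_compMap_deg hM her _ hB, ⟨n - 1, 0, by omega, ?_, ?_⟩, ?_⟩
    · rw [card_compMap hM her, hset, ncard_compl_delSet hM her, hcard]
      omega
    · rw [card_compMap_deg hM her _ hB]
    · have hAbd : (compMap M (dartA M)).boundary = M.boundary.filterMap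
          (fun x => if h : inComp M (dartA M) x then some (some ⟨x, h⟩) else none) := by
        exact if_neg hA
      have hsplit := lenFM_split M.boundary
        (fun x => if h : inComp M (dartA M) x then some (some (⟨x, h⟩ : {z // inComp M (dartA M) z})) else none)
        (fun x => if x = M.v (M.v (M.e M.root)) then some 0 else none) ?_
      · have hone := lenFM_single M.boundary (M.v (M.v (M.e M.root))) 0 hM.nodup hd2b
        refine ⟨(compMap M (dartA M)).boundary.length, 1, ?_, rfl,
          len_compMap_deg hM her _ hB⟩
        have hlA : (compMap M (dartA M)).boundary.length = (M.boundary.filterMap (fun x => if h : inComp M (dartA M) x then some (some (⟨x, h⟩ : {z // inComp M (dartA M) z})) else none)).length := congrArg List.length hAbd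
        omega
      · intro x hx
        rw [isSome_dite]
        constructor
        · intro h
          have hxd : x ∉ delSet M := h.1
          simp only [Option.isSome_iff_exists]
          rintro ⟨b, hb⟩
          by_cases hxe : x = M.v (M.v (M.e M.root))
          · exact hxd (hxe ▸ (mem_delSet hM her).mpr (Or.inr (Or.inr (Or.inr rfl))))
          · rw [if_neg hxe] at hb; cases hb
        · intro h
          have hxe : x ≠ M.v (M.v (M.e M.root)) := by
            intro heq
            exact h (by simp [heq])
          apply hfull
          intro hxd
          rcases bd_delSet hM her hx hxd with heq | heq
          · -- x = d1, so d1 is a boundary dart, so dartA = d1 ∈ delSet, contradiction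
            apply hA
            have hfix : M.e x = x := (hM.e_fix x).mpr hx
            rw [heq] at hfix
            exact (mem_delSet hM her).mpr (Or.inr (Or.inr (Or.inl hfix)))
          · exact hxe heq
  -- neither vacated dart is deleted
  have hbd_not_del : ∀ x ∈ M.boundary, x ∉ delSet M := by
    intro x hx hxd
    have hfix : M.e x = x := (hM.e_fix x).mpr hx
    rcases bd_delSet hM her hx hxd with heq | heq
    · apply hA
      rw [heq] at hfix
      exact (mem_delSet hM her).mpr (Or.inr (Or.inr (Or.inl hfix)))
    · apply hB
      rw [heq] at hfix
      exact (mem_delSet hM her).mpr (Or.inr (Or.inr (Or.inr hfix)))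
  by_cases hconn : DConn M (dartA M) (dartB M)
  · -- connected case
    right
    have hset : ({x | inComp2 M x} : Set M.carrier) = {x | x ∉ delSet M} := by
      ext x
      exact ⟨fun h => h.1, fun h => ⟨h, reach hM her x h⟩⟩
    refine ⟨Or.inr hconn, isRTMapB_connMap hM her hA hB hconn, ?_, ?_⟩
    · rw [card_connMap hM her, hset, ncard_compl_delSet hM her, hcard]
      omega
    · show List.length (M.boundary.filterMap (fun x => if h : inComp2 M x then some (some (⟨x, h⟩ : {z // inComp2 M z})) else none) ++ [if h : inComp2 M (dartB M) then some (⟨dartB M, h⟩ : {z // inComp2 M z}) else none] : List (Option {z // inComp2 M z})) = k + 1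
      rw [List.length_append, lenFM_all M.boundary _ (fun x hx => by
        rw [isSome_dite]
        exact ⟨hbd_not_del x hx, reach hM her x (hbd_not_del x hx)⟩), hk]
      rfl
  · -- disconnected case
    left
    have hnotconn : ¬ ConnCase M := by
      rintro (h | h)
      · exact hloop h
      · exact hconn h
    have honlyA : ∀ x, inComp M (dartA M) x → M.e x ∈ delSet M → x = dartA M := by
      intro x hx hex
      rcases emem_delSet hM her hex with rfl | rfl | rfl | rfl
      · exact absurd (root_mem_delSet hM her) hx.1
      · exact absurd ((mem_delSet hM her).mpr (Or.inr (Or.inl rfl))) hx.1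
      · rfl
      · exact absurd hx.2 hconn
    have honlyB : ∀ x, inComp M (dartB M) x → M.e x ∈ delSet M → x = dartB M := by
      intro x hx hex
      rcases emem_delSet hM her hex with rfl | rfl | rfl | rfl
      · exact absurd (root_mem_delSet hM her) hx.1
      · exact absurd ((mem_delSet hM her).mpr (Or.inr (Or.inl rfl))) hx.1
      · exact absurd (Relation.EqvGen.symm _ _ hx.2) hconn
      · rfl
    have hdisj : ∀ x, inComp M (dartA M) x → inComp M (dartB M) x → False := by
      intro x h1 h2
      exact hconn (Relation.EqvGen.trans _ _ _ h1.2 (Relation.EqvGen.symm _ _ h2.2))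
    have hsplitset : ({x | inComp M (dartA M) x} : Set M.carrier) ∪
        {x | inComp M (dartB M) x} = {x | x ∉ delSet M} := by
      ext x
      constructor
      · rintro (h | h)
        exacts [h.1, h.1]
      · intro h
        rcases reach hM her x h with hd | hd
        · exact Or.inl ⟨h, hd⟩
        · exact Or.inr ⟨h, hd⟩
    have hdisj' : Disjoint ({x | inComp M (dartA M) x} : Set M.carrier)
        {x | inComp M (dartB M) x} := by
      rw [Set.disjoint_left]
      intro x h1 h2
      exact hdisj x h1 h2
    have hcardsum : ({x | inComp M (dartA M) x} : Set M.carrier).ncard +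
        ({x | inComp M (dartB M) x} : Set M.carrier).ncard = 3 * n - 3 := by
      have h1 := Set.ncard_union_eq hdisj' (Set.toFinite _) (Set.toFinite _)
      rw [hsplitset, ncard_compl_delSet hM her, hcard] at h1
      omega
    have h3A : 3 ∣ ({x | inComp M (dartA M) x} : Set M.carrier).ncard := by
      rw [← card_subtype_eq_ncard]
      exact three_dvd_comp hM her (dartA M)
    have h3B : 3 ∣ ({x | inComp M (dartB M) x} : Set M.carrier).ncard := by
      rw [← card_subtype_eq_ncard]
      exact three_dvd_comp hM her (dartB M)
    obtain ⟨m1, hm1⟩ := h3A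
    obtain ⟨m2, hm2⟩ := h3B
    refine ⟨hnotconn, isRTMapB_compMap hM her (dartA M) hA (e_dartA_mem hM her) honlyA,
      isRTMapB_compMap hM her (dartB M) hB (e_dartB_mem hM her) honlyB,
      ⟨m1, m2, by omega, ?_, ?_⟩, ?_⟩
    · rw [card_compMap hM her, hm1]
    · rw [card_compMap hM her, hm2]
    · have hAbd : (compMap M (dartA M)).boundary = M.boundary.filterMap
          (fun x => if h : inComp M (dartA M) x then some (some ⟨x, h⟩) else none) := by
        exact if_neg hA
      have hBbd : (compMap M (dartB M)).boundary = M.boundary.filterMap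
          (fun x => if h : inComp M (dartB M) x then some (some ⟨x, h⟩) else none) := by
        exact if_neg hB
      have hsplit := lenFM_split M.boundary
        (fun x => if h : inComp M (dartA M) x then some (some (⟨x, h⟩ : {z // inComp M (dartA M) z})) else none)
        (fun x => if h : inComp M (dartB M) x then some (some (⟨x, h⟩ : {z // inComp M (dartB M) z})) else none) ?_
      · refine ⟨(compMap M (dartA M)).boundary.length,
          (compMap M (dartB M)).boundary.length, ?_, rfl, rfl⟩
        have hlA : (compMap M (dartA M)).boundary.length = (M.boundary.filterMap (fun x => if h : inComp M (dartA M) x then some (some (⟨x, h⟩ : {z // inComp M (dartA M) z})) else none)).length := congrArg List.length hAbd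
        have hlB : (compMap M (dartB M)).boundary.length = (M.boundary.filterMap (fun x => if h : inComp M (dartB M) x then some (some (⟨x, h⟩ : {z // inComp M (dartB M) z})) else none)).length := congrArg List.length hBbd
        omega
      · intro x hx
        rw [isSome_dite, isSome_dite]
        constructor
        · intro h1 h2
          exact hdisj x h1 h2
        · intro h
          rcases reach hM her x (hbd_not_del x hx) with hd | hd
          · exact ⟨hbd_not_del x hx, hd⟩
          · exact absurd ⟨hbd_not_del x hx, hd⟩ h
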